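/- Let Q be a positive definite quadratic form on R^N, h ∈ R^N, and P̂ a polynomial. Then there exist constants K, C > 0 such that for all x ≥ 1 (and uniformly for h in a set bounded away from the lattice Z^N if P̂(0)≠0 issues are excluded), the theta-type sum Θ̂(x) = Σ_{λ ∈ Z^N} exp(−x π² Q^∨(λ+h)) P̂(λ) satisfies |Θ̂(x)| ≤ C exp(−Kx), provided h ∉ Z^N. -/

import Mathlib

open Real

-- A quadratic form on `Fin N → ℝ` is a finite sum of monomials, hence continuous.
lemma aux_quad_eq_sum {N : ℕ} (Qd : QuadraticForm ℝ (Fin N → ℝ)) :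
    ∃ c : Fin N → Fin N → ℝ, ∀ w, Qd w = ∑ i, ∑ j, w i * w j * c i j := by
  classical
  set B := QuadraticMap.associated (R := ℝ) Qd with hB
  refine ⟨fun i j => B (Pi.single i (1:ℝ) : Fin N → ℝ) (Pi.single j (1:ℝ) : Fin N → ℝ), fun w => ?_⟩
  have h1 : Qd w = B w w := (QuadraticMap.associated_eq_self_apply ℝ Qd w).symm
  have h2 : w = ∑ i, (w i) • (Pi.single i (1:ℝ) : Fin N → ℝ) := by
    funext j
    simp [Finset.sum_apply, Pi.single_apply]
  rw [h1]
  conv_lhs => rw [h2]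
  simp [map_sum, LinearMap.sum_apply, map_smul, LinearMap.smul_apply, smul_eq_mul,
    Finset.mul_sum, mul_assoc]
  rw [Finset.sum_comm]
  exact Finset.sum_congr rfl fun i _ => Finset.sum_congr rfl fun j _ => by ring

lemma aux_quad_continuous {N : ℕ} (Qd : QuadraticForm ℝ (Fin N → ℝ)) :
    Continuous fun w => Qd w := by
  obtain ⟨c, hc⟩ := aux_quad_eq_sum Qd
  simp only [hc]
  fun_prop

lemma aux_quad_lb {N : ℕ} (hN : 0 < N) (Qd : QuadraticForm ℝ (Fin N → ℝ))
    (hQ : Qd.PosDef) :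
    ∃ c : ℝ, 0 < c ∧ ∀ w : Fin N → ℝ, c * ∑ i, w i ^ 2 ≤ Qd w := by
  have cont : Continuous fun w : Fin N → ℝ => Qd w := aux_quad_continuous Qd
  have contq : Continuous fun w : Fin N → ℝ => ∑ i, w i ^ 2 := by fun_prop
  set S : Set (Fin N → ℝ) := {w | ∑ i, w i ^ 2 = 1} with hS
  have hclosed : IsClosed S := isClosed_eq contq continuous_const
  have hsub : S ⊆ Metric.closedBall 0 1 := by
    intro w hw
    rw [Metric.mem_closedBall, dist_zero_right]
    refine (pi_norm_le_iff_of_nonneg zero_le_one).2 fun i => ?_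
    have h1 : w i ^ 2 ≤ 1 := by
      rw [← hw]
      exact Finset.single_le_sum (fun j _ => sq_nonneg (w j)) (Finset.mem_univ i)
    rw [Real.norm_eq_abs]
    exact (sq_le_one_iff_abs_le_one (w i)).1 h1
  have hcomp : IsCompact S :=
    (isCompact_closedBall (0 : Fin N → ℝ) 1).of_isClosed_subset hclosed hsub
  have hne : S.Nonempty := by
    refine ⟨(Pi.single (⟨0, hN⟩ : Fin N) (1:ℝ) : Fin N → ℝ), ?_⟩
    simp [hS, Pi.single_apply, Finset.sum_ite_eq']
  obtain ⟨w₁, hw₁S, hmin⟩ := hcomp.exists_isMinOn hne cont.continuousOn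
  have hw₁ : w₁ ≠ 0 := by
    intro h0
    have : (0:ℝ) = 1 := by simpa [hS, h0] using hw₁S
    norm_num at this
  refine ⟨Qd w₁, hQ w₁ hw₁, fun w => ?_⟩
  rcases eq_or_ne w 0 with rfl | hw0
  · simp
  · set s : ℝ := ∑ i, w i ^ 2 with hs
    have hspos : 0 < s := by
      have hnn : 0 ≤ s := Finset.sum_nonneg fun i _ => sq_nonneg _
      rcases hnn.lt_or_eq with h | h
      · exact h
      · exfalso
        apply hw0
        funext i
        have := (Finset.sum_eq_zero_iff_of_nonneg
          (fun j _ => sq_nonneg (w j))).1 h.symm i (Finset.mem_univ i)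
        exact pow_eq_zero_iff (n := 2) (by norm_num) |>.1 this
    have hsq : Real.sqrt s ≠ 0 := by positivity
    set u : Fin N → ℝ := (Real.sqrt s)⁻¹ • w with hu
    have huS : u ∈ S := by
      have : ∑ i, u i ^ 2 = (Real.sqrt s)⁻¹ ^ 2 * s := by
        simp [hu, mul_pow, Finset.mul_sum, hs]
      have h2 : (Real.sqrt s)⁻¹ ^ 2 = s⁻¹ := by
        rw [← Real.sqrt_inv, Real.sq_sqrt (by positivity)]
      simp only [hS, Set.mem_setOf_eq, this, h2]
      field_simp
    have hQu : Qd w₁ ≤ Qd u := hmin huS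
    have hscale : Qd w = s * Qd u := by
      have hwu : w = Real.sqrt s • u := by
        rw [hu, smul_inv_smul₀ hsq]
      rw [hwu, QuadraticMap.map_smul, smul_eq_mul,
        Real.mul_self_sqrt (le_of_lt hspos)]
    calc Qd w₁ * s ≤ Qd u * s := by nlinarith
      _ = Qd w := by rw [hscale]; ring

lemma aux_summable_nat {b : ℝ} (hb : 0 < b) (t : ℝ) (d : ℕ) :
    Summable (fun n : ℕ => Real.exp (-(b * ((n : ℝ) + t) ^ 2)) * (1 + (n : ℝ)) ^ d) := by
  have hgeo : Summable (fun n : ℕ => (n : ℝ) ^ d * Real.exp (-1) ^ n) :=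
    summable_pow_mul_geometric_of_norm_lt_one d
      (by rw [Real.norm_eq_abs, abs_of_pos (Real.exp_pos _)]; exact Real.exp_lt_one_iff.2 (by norm_num))
  refine summable_of_isBigO_nat ((hgeo.mul_left ((2:ℝ)^d))) ?_
  rw [Asymptotics.isBigO_iff]
  refine ⟨1, ?_⟩
  rw [Filter.eventually_atTop]
  refine ⟨max 1 (Nat.ceil (max (2 * |t|) (4 / b))), fun n hn => ?_⟩
  have hn1 : 1 ≤ n := le_trans (le_max_left _ _) hn
  have hn2 : (2 * |t|) ≤ (n : ℝ) := by
    calc 2 * |t| ≤ max (2 * |t|) (4 / b) := le_max_left _ _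
      _ ≤ (Nat.ceil (max (2 * |t|) (4 / b)) : ℝ) := Nat.le_ceil _
      _ ≤ (n : ℝ) := by exact_mod_cast (le_max_right _ _).trans hn
  have hn3 : 4 / b ≤ (n : ℝ) := by
    calc 4 / b ≤ max (2 * |t|) (4 / b) := le_max_right _ _
      _ ≤ (Nat.ceil (max (2 * |t|) (4 / b)) : ℝ) := Nat.le_ceil _
      _ ≤ (n : ℝ) := by exact_mod_cast (le_max_right _ _).trans hn
  have hnR : (1:ℝ) ≤ (n:ℝ) := by exact_mod_cast hn1
  -- key : b * ((n:ℝ)+t)^2 ≥ n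
  have habs : (n : ℝ) / 2 ≤ (n : ℝ) + t := by
    have : -|t| ≤ t := neg_abs_le t
    nlinarith
  have hsq : ((n:ℝ)/2) ^ 2 ≤ ((n:ℝ)+t) ^ 2 := by
    have h0 : (0:ℝ) ≤ (n:ℝ)/2 := by positivity
    nlinarith
  have hkey : (n : ℝ) ≤ b * ((n:ℝ)+t) ^ 2 := by
    have h4 : 4 ≤ b * (n : ℝ) := by
      rw [div_le_iff₀ hb] at hn3
      nlinarith
    calc (n:ℝ) = (4 * (n:ℝ)) / 4 := by ring
      _ ≤ (b * (n:ℝ) * (n:ℝ)) / 4 := by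
          apply div_le_div_of_nonneg_right ?_ (by norm_num)
          nlinarith
      _ = b * ((n:ℝ)/2)^2 := by ring
      _ ≤ b * ((n:ℝ)+t)^2 := by nlinarith
  have hexp : Real.exp (-(b * ((n:ℝ)+t)^2)) ≤ Real.exp (-1) ^ n := by
    rw [← Real.exp_nat_mul]
    apply Real.exp_le_exp.2
    simpa using hkey
  have hpow : (1 + (n:ℝ)) ^ d ≤ 2 ^ d * (n:ℝ) ^ d := by
    rw [← mul_pow]
    exact pow_le_pow_left₀ (by positivity) (by nlinarith) d
  rw [Real.norm_eq_abs, Real.norm_eq_abs]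
  have hfnn : 0 ≤ Real.exp (-(b * ((n : ℝ) + t) ^ 2)) * (1 + (n : ℝ)) ^ d := by positivity
  have hgnn : 0 ≤ (2:ℝ)^d * ((n : ℝ) ^ d * Real.exp (-1) ^ n) := by positivity
  rw [abs_of_nonneg hfnn, abs_of_nonneg hgnn, one_mul]
  calc Real.exp (-(b * ((n : ℝ) + t) ^ 2)) * (1 + (n : ℝ)) ^ d
      ≤ Real.exp (-1) ^ n * (2 ^ d * (n:ℝ) ^ d) := by
        apply mul_le_mul hexp hpow (by positivity) (by positivity)
    _ = (2:ℝ)^d * ((n : ℝ) ^ d * Real.exp (-1) ^ n) := by ring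

lemma aux_summable_int {b : ℝ} (hb : 0 < b) (t : ℝ) (d : ℕ) :
    Summable (fun n : ℤ => Real.exp (-(b * ((n : ℝ) + t) ^ 2)) * (1 + |(n : ℝ)|) ^ d) := by
  apply Summable.of_nat_of_neg
  · have := aux_summable_nat hb t d
    apply this.congr
    intro n
    simp
  · have := aux_summable_nat hb (-t) d
    apply this.congr
    intro n
    push_cast
    rw [abs_neg, abs_of_nonneg (by positivity : (0:ℝ) ≤ (n:ℝ))]
    ring_nf

set_option maxHeartbeats 1000000 in
lemma aux_summable_pi : ∀ (N : ℕ) (g : Fin N → ℤ → ℝ), (∀ i n, 0 ≤ g i n) →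
    (∀ i, Summable (g i)) → Summable (fun v : Fin N → ℤ => ∏ i, g i (v i)) := by
  intro N
  induction N with
  | zero =>
    intro g _ _
    exact .of_finite
  | succ n ih =>
    intro g h0 hs
    have key := Summable.mul_of_nonneg (f := g 0)
      (g := fun w : Fin n → ℤ => ∏ i : Fin n, g i.succ (w i)) (hs 0)
      (ih (fun i => g i.succ) (fun i n => h0 _ _) (fun i => hs i.succ))
      (fun m => h0 _ _) (fun w => Finset.prod_nonneg fun i _ => h0 _ _)
    rw [← (Fin.consEquiv (fun _ : Fin (n+1) => ℤ)).summable_iff]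
    apply key.congr
    intro p
    simp [Fin.consEquiv, Fin.prod_univ_succ]

lemma aux_poly_bound {N : ℕ} (P : MvPolynomial (Fin N) ℝ) (y : Fin N → ℝ) :
    |MvPolynomial.eval y P| ≤
      (∑ s ∈ P.support, |MvPolynomial.coeff s P|) * ∏ i, (1 + |y i|) ^ P.totalDegree := by
  classical
  rw [MvPolynomial.eval_eq']
  refine (Finset.abs_sum_le_sum_abs _ _).trans ?_
  rw [Finset.sum_mul]
  apply Finset.sum_le_sum
  intro s hs
  rw [abs_mul]
  apply mul_le_mul_of_nonneg_left ?_ (abs_nonneg _)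
  rw [Finset.abs_prod]
  apply Finset.prod_le_prod (fun i _ => abs_nonneg _)
  intro i _
  have hsD : s i ≤ P.totalDegree := by
    refine le_trans ?_ (MvPolynomial.le_totalDegree hs)
    rw [Finsupp.sum]
    by_cases hsi : s i = 0
    · simp [hsi]
    · exact Finset.single_le_sum (f := fun j => s j) (fun j _ => Nat.zero_le _)
        (Finsupp.mem_support_iff.2 hsi)
  calc |y i ^ s i| = |y i| ^ s i := abs_pow _ _
    _ ≤ (1 + |y i|) ^ s i := pow_le_pow_left₀ (abs_nonneg _) (by linarith [abs_nonneg (y i)]) _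
    _ ≤ (1 + |y i|) ^ P.totalDegree :=
        pow_le_pow_right₀ (by linarith [abs_nonneg (y i)]) hsD


/-- for a positive definite quadratic form `Qd` on `ℝ^N`
(standing for the dual form `Q^∨` of a positive definite form `Q`), a
polynomial `P̂`, and `h ∈ ℝ^N ∖ ℤ^N`, the theta-type sum
`Θ̂(x) = Σ_{λ ∈ ℤ^N} exp(−x π² Q^∨(λ+h)) P̂(λ)` converges and satisfies a
uniform exponential bound `|Θ̂(x)| ≤ C exp(−Kx)` for `x ≥ 1`. -/
theorem stmt13 (N : ℕ) (Qd : QuadraticForm ℝ (Fin N → ℝ)) (hQ : Qd.PosDef)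
    (P : MvPolynomial (Fin N) ℝ) (h : Fin N → ℝ)
    (hh : ∀ m : Fin N → ℤ, h ≠ fun i => (m i : ℝ)) :
    ∃ K C : ℝ, 0 < K ∧ 0 < C ∧ ∀ x : ℝ, 1 ≤ x →
      Summable (fun v : Fin N → ℤ =>
        Real.exp (-(x * π ^ 2 * Qd (fun i => (v i : ℝ) + h i))) *
          MvPolynomial.eval (fun i => (v i : ℝ)) P) ∧
      |∑' v : Fin N → ℤ,
        Real.exp (-(x * π ^ 2 * Qd (fun i => (v i : ℝ) + h i))) *
          MvPolynomial.eval (fun i => (v i : ℝ)) P| ≤ C * Real.exp (-K * x) := by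
  classical
  have hex : ∃ i₀ : Fin N, ∀ m : ℤ, h i₀ ≠ (m : ℝ) := by
    by_contra hcon
    push_neg at hcon
    choose m hm using hcon
    exact hh m (funext hm)
  obtain ⟨i₀, hi₀⟩ := hex
  have hN : 0 < N := i₀.pos
  obtain ⟨c, hc, hcle⟩ := aux_quad_lb hN Qd hQ
  set ε : ℝ := |h i₀ - (round (h i₀) : ℝ)| with hεdef
  have hε : 0 < ε := by
    rw [hεdef, abs_pos, sub_ne_zero]
    exact hi₀ _
  have hεle : ∀ n : ℤ, ε ≤ |(n : ℝ) + h i₀| := by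
    intro n
    calc ε ≤ |h i₀ - ((-n : ℤ) : ℝ)| := round_le (h i₀) (-n)
      _ = |(n : ℝ) + h i₀| := by push_cast; rw [sub_neg_eq_add, add_comm]
  set D := P.totalDegree with hD
  set A : ℝ := ∑ s ∈ P.support, |MvPolynomial.coeff s P| with hAdef
  have hA : 0 ≤ A := Finset.sum_nonneg fun s _ => abs_nonneg _
  set b : ℝ := π ^ 2 * c with hb
  have hbpos : 0 < b := mul_pos (pow_pos Real.pi_pos 2) hc
  set g : Fin N → ℤ → ℝ :=
    fun i n => Real.exp (-(b * ((n : ℝ) + h i) ^ 2)) * (1 + |(n : ℝ)|) ^ D with hgdef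
  have hg0 : ∀ i n, 0 ≤ g i n := by intro i n; positivity
  have hgs : ∀ i, Summable (g i) := fun i => aux_summable_int hbpos (h i) D
  set G : (Fin N → ℤ) → ℝ := fun v => A * ∏ i, g i (v i) with hGdef
  have hGsum : Summable G := (aux_summable_pi N g hg0 hgs).mul_left A
  have hG0 : ∀ v, 0 ≤ G v := fun v => mul_nonneg hA (Finset.prod_nonneg fun i _ => hg0 _ _)
  set S := ∑' v, G v with hSdef
  have hS0 : 0 ≤ S := tsum_nonneg hG0
  set K : ℝ := π ^ 2 * (c * ε ^ 2) with hK
  have hKpos : 0 < K := mul_pos (pow_pos Real.pi_pos 2) (mul_pos hc (pow_pos hε 2))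
  refine ⟨K, (S + 1) * Real.exp K, hKpos, by positivity, fun x hx => ?_⟩
  have hQlb : ∀ v : Fin N → ℤ, c * ε ^ 2 ≤ Qd (fun i => (v i : ℝ) + h i) := by
    intro v
    refine le_trans ?_ (hcle _)
    have h1 : ε ^ 2 ≤ ((v i₀ : ℝ) + h i₀) ^ 2 := by
      calc ε ^ 2 ≤ |(v i₀ : ℝ) + h i₀| ^ 2 := pow_le_pow_left₀ hε.le (hεle (v i₀)) 2
        _ = ((v i₀ : ℝ) + h i₀) ^ 2 := sq_abs _
    have h2 : ((v i₀ : ℝ) + h i₀) ^ 2 ≤ ∑ i, ((v i : ℝ) + h i) ^ 2 :=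
      Finset.single_le_sum (f := fun i => ((v i : ℝ) + h i) ^ 2)
        (fun i _ => sq_nonneg _) (Finset.mem_univ i₀)
    exact mul_le_mul_of_nonneg_left (h1.trans h2) hc.le
  have hptw : ∀ v : Fin N → ℤ,
      |Real.exp (-(x * π ^ 2 * Qd (fun i => (v i : ℝ) + h i))) *
        MvPolynomial.eval (fun i => (v i : ℝ)) P| ≤ Real.exp (-(K * (x - 1))) * G v := by
    intro v
    set Q : ℝ := Qd (fun i => (v i : ℝ) + h i) with hQdef
    have hQlb' : c * ε ^ 2 ≤ Q := hQlb v
    have hQnn : 0 ≤ Q := le_trans (by positivity) hQlb'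
    rw [abs_mul, abs_of_pos (Real.exp_pos _)]
    have hKQ : K ≤ π ^ 2 * Q := by
      rw [hK]
      exact mul_le_mul_of_nonneg_left hQlb' (by positivity)
    have hsplit : Real.exp (-(x * π ^ 2 * Q)) ≤
        Real.exp (-(K * (x - 1))) * Real.exp (-(π ^ 2 * Q)) := by
      rw [← Real.exp_add]
      apply Real.exp_le_exp.2
      nlinarith [mul_nonneg (sub_nonneg.2 hx) (sub_nonneg.2 hKQ)]
    have hpoly : |MvPolynomial.eval (fun i => (v i : ℝ)) P| ≤
        A * ∏ i, (1 + |(v i : ℝ)|) ^ D := aux_poly_bound P _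
    have hprod : Real.exp (-(π ^ 2 * Q)) ≤
        ∏ i, Real.exp (-(b * ((v i : ℝ) + h i) ^ 2)) := by
      rw [← Real.exp_sum]
      apply Real.exp_le_exp.2
      have hq : b * ∑ i, ((v i : ℝ) + h i) ^ 2 ≤ π ^ 2 * Q := by
        rw [hb, mul_assoc]
        exact mul_le_mul_of_nonneg_left (hcle _) (by positivity)
      have hsum : ∑ i, -(b * ((v i : ℝ) + h i) ^ 2) = -(b * ∑ i, ((v i : ℝ) + h i) ^ 2) := by
        rw [Finset.mul_sum, ← Finset.sum_neg_distrib]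
      rw [hsum]
      linarith
    calc Real.exp (-(x * π ^ 2 * Q)) * |MvPolynomial.eval (fun i => (v i : ℝ)) P|
        ≤ (Real.exp (-(K * (x - 1))) * Real.exp (-(π ^ 2 * Q))) *
            (A * ∏ i, (1 + |(v i : ℝ)|) ^ D) :=
          mul_le_mul hsplit hpoly (abs_nonneg _) (by positivity)
      _ = Real.exp (-(K * (x - 1))) *
            (Real.exp (-(π ^ 2 * Q)) * (A * ∏ i, (1 + |(v i : ℝ)|) ^ D)) := by ring
      _ ≤ Real.exp (-(K * (x - 1))) *
            ((∏ i, Real.exp (-(b * ((v i : ℝ) + h i) ^ 2))) *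
              (A * ∏ i, (1 + |(v i : ℝ)|) ^ D)) := by
          apply mul_le_mul_of_nonneg_left ?_ (Real.exp_pos _).le
          exact mul_le_mul_of_nonneg_right hprod (by positivity)
      _ = Real.exp (-(K * (x - 1))) * G v := by
          rw [hGdef]
          simp only [hgdef]
          rw [Finset.prod_mul_distrib]
          ring
  have hexp1 : Real.exp (-(K * (x - 1))) ≤ 1 :=
    Real.exp_le_one_iff.2 (by nlinarith)
  have hTabs : Summable (fun v : Fin N → ℤ =>
      |Real.exp (-(x * π ^ 2 * Qd (fun i => (v i : ℝ) + h i))) *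
        MvPolynomial.eval (fun i => (v i : ℝ)) P|) := by
    apply Summable.of_nonneg_of_le (fun v => abs_nonneg _) ?_ hGsum
    intro v
    refine (hptw v).trans ?_
    nlinarith [hG0 v]
  have hTsum : Summable (fun v : Fin N → ℤ =>
      Real.exp (-(x * π ^ 2 * Qd (fun i => (v i : ℝ) + h i))) *
        MvPolynomial.eval (fun i => (v i : ℝ)) P) := summable_abs_iff.1 hTabs
  refine ⟨hTsum, ?_⟩
  have h1 : |∑' v : Fin N → ℤ,
      Real.exp (-(x * π ^ 2 * Qd (fun i => (v i : ℝ) + h i))) *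
        MvPolynomial.eval (fun i => (v i : ℝ)) P| ≤
      ∑' v : Fin N → ℤ,
        |Real.exp (-(x * π ^ 2 * Qd (fun i => (v i : ℝ) + h i))) *
          MvPolynomial.eval (fun i => (v i : ℝ)) P| := by
    rw [← Real.norm_eq_abs]
    refine le_trans (norm_tsum_le_tsum_norm ?_) ?_
    · simpa only [Real.norm_eq_abs] using hTabs
    · simp only [Real.norm_eq_abs]
      exact le_refl _
  have h2 : ∑' v : Fin N → ℤ,
      |Real.exp (-(x * π ^ 2 * Qd (fun i => (v i : ℝ) + h i))) *
        MvPolynomial.eval (fun i => (v i : ℝ)) P| ≤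
      ∑' v : Fin N → ℤ, Real.exp (-(K * (x - 1))) * G v :=
    Summable.tsum_le_tsum hptw hTabs (hGsum.mul_left _)
  have h3 : ∑' v : Fin N → ℤ, Real.exp (-(K * (x - 1))) * G v =
      Real.exp (-(K * (x - 1))) * S := by
    rw [hSdef, tsum_mul_left]
  have h4 : Real.exp (-(K * (x - 1))) * S ≤ (S + 1) * Real.exp K * Real.exp (-K * x) := by
    have e1 : Real.exp (-(K * (x - 1))) = Real.exp K * Real.exp (-K * x) := by
      rw [← Real.exp_add]
      ring_nf
    rw [e1]
    nlinarith [mul_pos (Real.exp_pos K) (Real.exp_pos (-K * x)), hS0]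
  linarith
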